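/- Let n ≥ 2 be an integer, let G be a finite abelian group isomorphic to C_2 ⊕ C_2 ⊕ C_{2n}, and let {f_1, f_2, f_3} be a basis of G with ord(f_1) = ord(f_2) = 2 and ord(f_3) = 2n. Let d_1, …, d_{2n+1} be elements of the subgroup ⟨f_1, f_2⟩ and set S = ∏_{i=1}^{2n+1} (f_3+d_i) · f_2 · f_1 and S' = ∏_{i=1}^{2n+1} d_i. Then S contains no nonempty zero-sum subsequence of length at most 2n if and only if σ(S') ∉ supp(S'). -/

import Mathlib

private lemma sum_map_add_const {M : Type*} [AddCommMonoid M] (c : M) (D : Multiset M) :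
    (D.map (fun d => c + d)).sum = (Multiset.card D) • c + D.sum := by
  induction D using Multiset.induction with
  | empty => simp
  | cons a s ih =>
    simp only [Multiset.map_cons, Multiset.sum_cons, ih, Multiset.card_cons, succ_nsmul]
    abel

private lemma rep_closure {G : Type*} [AddCommGroup G] (f1 f2 : G) {x : G}
    (hx : x ∈ AddSubgroup.closure ({f1, f2} : Set G)) :
    ∃ a b : ℤ, x = a • f1 + b • f2 := by
  induction hx using AddSubgroup.closure_induction with
  | mem y hy =>
    rcases hy with h | h
    · exact ⟨1, 0, by simp [h]⟩
    · exact ⟨0, 1, by simp [Set.mem_singleton_iff.mp h]⟩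
  | zero => exact ⟨0, 0, by simp⟩
  | add x y _ _ ihx ihy =>
    obtain ⟨a, b, rfl⟩ := ihx
    obtain ⟨a', b', rfl⟩ := ihy
    exact ⟨a + a', b + b', by rw [add_zsmul, add_zsmul]; abel⟩
  | neg x _ ihx =>
    obtain ⟨a, b, rfl⟩ := ihx
    exact ⟨-a, -b, by rw [neg_zsmul, neg_zsmul]; abel⟩

/-- The sequences of type (η3) contain no short zero-sum subsequence
iff `σ(S') ∉ supp(S')`. -/
theorem stmt_17 (n : ℕ) (hn : 2 ≤ n) (G : Type*) [AddCommGroup G] [Fintype G]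
    (hG : Nonempty (G ≃+ (ZMod 2 × ZMod 2 × ZMod (2 * n))))
    (f1 f2 f3 : G)
    (hgen : AddSubgroup.closure ({f1, f2, f3} : Set G) = ⊤)
    (hind : ∀ a b c : ℤ, a • f1 + b • f2 + c • f3 = 0 →
      a • f1 = 0 ∧ b • f2 = 0 ∧ c • f3 = 0)
    (ho1 : addOrderOf f1 = 2) (ho2 : addOrderOf f2 = 2) (ho3 : addOrderOf f3 = 2 * n)
    (S' : Multiset G) (hS'card : Multiset.card S' = 2 * n + 1)
    (hS'mem : ∀ d ∈ S', d ∈ AddSubgroup.closure ({f1, f2} : Set G))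
    (S : Multiset G)
    (hS : S = Multiset.map (fun d => f3 + d) S' + {f2, f1}) :
    (¬ ∃ T : Multiset G, T ≤ S ∧ T ≠ 0 ∧ Multiset.card T ≤ 2 * n ∧ T.sum = 0) ↔
    S'.sum ∉ S' := by
  classical
  have hf1 : f1 ≠ 0 := by
    intro h; rw [h, addOrderOf_zero] at ho1; omega
  have hf2 : f2 ≠ 0 := by
    intro h; rw [h, addOrderOf_zero] at ho2; omega
  rw [not_iff_not]
  set A : Multiset G := Multiset.map (fun d => f3 + d) S' with hA
  constructor
  · rintro ⟨T, hTS, hT0, hTcard, hTsum⟩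
    rw [hS] at hTS
    set T1 : Multiset G := T ∩ A with hT1def
    set T2 : Multiset G := T - A with hT2def
    have h1 : T1 ≤ A := Multiset.inter_le_right
    have h1T : T1 ≤ T := Multiset.inter_le_left
    have h2 : T2 ≤ ({f2, f1} : Multiset G) := by
      rw [hT2def, Multiset.sub_le_iff_le_add]
      exact hTS.trans (le_of_eq (add_comm _ _))
    have hsplit : T = T1 + T2 := by
      ext a
      rw [Multiset.count_add, hT1def, hT2def, Multiset.count_inter, Multiset.count_sub]
      omega
    -- recover D ≤ S' with T1 = map (f3 + ·) D
    set D : Multiset G := T1.map (fun x => x - f3) with hDdef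
    have hD : D ≤ S' := by
      have := Multiset.map_le_map (f := fun x => x - f3) h1
      rw [hA, Multiset.map_map] at this
      simpa using this
    have hT1 : T1 = D.map (fun d => f3 + d) := by
      rw [hDdef, Multiset.map_map]
      conv_lhs => rw [← Multiset.map_id T1]
      exact Multiset.map_congr rfl (fun x _ => by simp)
    set k : ℕ := Multiset.card D with hk
    have hcardT1 : Multiset.card T1 = k := by rw [hT1, Multiset.card_map]
    -- sums lie in the closure
    have hDsum : D.sum ∈ AddSubgroup.closure ({f1, f2} : Set G) :=
      AddSubgroup.multiset_sum_mem _ _ fun x hx => hS'mem x (Multiset.mem_of_le hD hx)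
    have hT2sum : T2.sum ∈ AddSubgroup.closure ({f1, f2} : Set G) := by
      refine AddSubgroup.multiset_sum_mem _ _ fun x hx => ?_
      have := Multiset.mem_of_le h2 hx
      simp only [Multiset.insert_eq_cons, Multiset.mem_cons, Multiset.mem_singleton] at this
      rcases this with rfl | rfl
      · exact AddSubgroup.subset_closure (by simp)
      · exact AddSubgroup.subset_closure (by simp)
    obtain ⟨a, b, hab⟩ := rep_closure f1 f2 (AddSubgroup.add_mem _ hDsum hT2sum)
    have hTsum' : T.sum = k • f3 + (D.sum + T2.sum) := by
      rw [hsplit, Multiset.sum_add, hT1, sum_map_add_const, add_assoc]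
    have hsum0 : (k : ℤ) • f3 + (D.sum + T2.sum) = 0 := by
      rw [natCast_zsmul, ← hTsum']; exact hTsum
    have hind' := hind a b k (by rw [← hab]; rw [add_comm] at hsum0; exact hsum0)
    have hkf3 : k • f3 = 0 := by
      have := hind'.2.2
      rwa [natCast_zsmul] at this
    have hrest : D.sum + T2.sum = 0 := by
      rw [hab, hind'.1, hind'.2.1, add_zero]
    have hdvd : 2 * n ∣ k := ho3 ▸ addOrderOf_dvd_of_nsmul_eq_zero hkf3
    have hkle : k ≤ 2 * n := by
      calc k = Multiset.card T1 := hcardT1.symm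
        _ ≤ Multiset.card T := Multiset.card_le_card h1T
        _ ≤ 2 * n := hTcard
    by_cases hk0 : k = 0
    · -- T1 empty, so T = T2 ≤ {f2, f1}, nonzero with zero sum: contradiction
      exfalso
      have hT1z : T1 = 0 := by
        rw [← Multiset.card_eq_zero, hcardT1]; exact hk0
      have hTT2 : T = T2 := by rw [hsplit, hT1z, zero_add]
      rw [hTT2] at hTsum hT0
      have hcle : Multiset.card T2 ≤ 2 := by
        have := Multiset.card_le_card h2
        simpa using this
      have hcpos : 1 ≤ Multiset.card T2 := by
        rw [Nat.one_le_iff_ne_zero, Ne, Multiset.card_eq_zero]; exact hT0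
      interval_cases h : Multiset.card T2
      · obtain ⟨x, hx⟩ := Multiset.card_eq_one.mp h
        rw [hx, Multiset.sum_singleton] at hTsum
        have hxm : x ∈ ({f2, f1} : Multiset G) := Multiset.mem_of_le h2 (by simp [hx])
        simp only [Multiset.insert_eq_cons, Multiset.mem_cons, Multiset.mem_singleton] at hxm
        rcases hxm with rfl | rfl
        · exact hf2 hTsum
        · exact hf1 hTsum
      · have : T2 = ({f2, f1} : Multiset G) :=
          Multiset.eq_of_le_of_card_le h2 (by simp [h])
        rw [this] at hTsum
        have hsum : f2 + f1 = 0 := by simpa using hTsum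
        have := (hind 1 1 0 (by simpa [add_comm] using hsum)).1
        rw [one_zsmul] at this
        exact hf1 this
    · -- k = 2n; T2 must be empty, D.sum = 0
      have hk2n : k = 2 * n := by
        have := Nat.le_of_dvd (Nat.pos_of_ne_zero hk0) hdvd
        omega
      have hT2z : T2 = 0 := by
        rw [← Multiset.card_eq_zero]
        have : Multiset.card T = Multiset.card T1 + Multiset.card T2 := by
          rw [hsplit, Multiset.card_add]
        omega
      rw [hT2z, Multiset.sum_zero, add_zero] at hrest
      -- S' = E + D with E a singleton
      set E : Multiset G := S' - D with hEdef
      have hE : E + D = S' := by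
        rw [hEdef]; exact tsub_add_cancel_of_le hD
      have hcardE : Multiset.card E = 1 := by
        have := congrArg Multiset.card hE
        rw [Multiset.card_add] at this
        omega
      obtain ⟨d, hd⟩ := Multiset.card_eq_one.mp hcardE
      have hsum : S'.sum = d := by
        rw [← hE, Multiset.sum_add, hd, Multiset.sum_singleton, hrest, add_zero]
      rw [hsum, ← hE, hd]
      simp
  · intro h
    set D : Multiset G := S'.erase S'.sum with hDdef
    have hDle : D ≤ S' := Multiset.erase_le _ _
    have hcons : S'.sum ::ₘ D = S' := Multiset.cons_erase h
    have hcardD : Multiset.card D = 2 * n := by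
      have := congrArg Multiset.card hcons
      rw [Multiset.card_cons] at this
      omega
    have hDsum : D.sum = 0 := by
      have := congrArg Multiset.sum hcons
      rw [Multiset.sum_cons] at this
      exact (left_eq_add.mp this.symm)
    refine ⟨D.map (fun d => f3 + d), ?_, ?_, ?_, ?_⟩
    · rw [hS]
      exact le_trans (Multiset.map_le_map hDle) (Multiset.le_add_right _ _)
    · intro hz
      have := congrArg Multiset.card hz
      rw [Multiset.card_map, hcardD] at this
      simp at this
      omega
    · rw [Multiset.card_map, hcardD]
    · rw [sum_map_add_const, hcardD, hDsum, add_zero, ← ho3]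
      exact addOrderOf_nsmul_eq_zero f3
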